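/- Let k ≥ 2, let V be a nonempty finite set, and let μ : (Fin k → V) → ℝ be a weighted k-uniform hypergraph on V with marginals m_i. Let λ_0, …, λ_{k-2} be real numbers with λ_i ≤ 0 for each i, such that for every 0 ≤ i ≤ k-2, every i-face σ : Fin i → V, and every f : V → ℝ: Σ_{u,v∈V} m_{i+2}(σ ⌢ (u,v))·f(u)·f(v) ≥ λ_i · Σ_{v∈V} (Σ_{u∈V} m_{i+2}(σ ⌢ (v,u)))·f(v)². Set B = 1 - 1/((1-λ_0)⋯(1-λ_{k-2})), and suppose there exists an independent set I₀ ⊆ V with Σ_{v∈I₀} m_1(v) = B. Then for every n ≥ 1, in the n-th tensor power μ_n on (Fin n → V): (a) every independent set J ⊆ (Fin n → V) satisfies Σ_{x∈J} Π_j m_1(x(j)) ≤ B, and (b) there exists an independent set J with Σ_{x∈J} Π_j m_1(x(j)) = B. In particular the independence number of the n-th tensor power equals B. -/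

import Mathlib

set_option maxHeartbeats 1000000


/-- The `i`-th marginal of a weight function `μ` on `k`-tuples: `marg μ i h σ` is the sum of
`μ` over all extensions of the `i`-tuple `σ` to a `k`-tuple (`σ` occupying the first `i`
coordinates). -/
noncomputable def marg {V : Type*} [Fintype V] {k : ℕ} (μ : (Fin k → V) → ℝ)
    (i : ℕ) (hik : i ≤ k) (σ : Fin i → V) : ℝ :=
  ∑ τ : Fin (k - i) → V,
    μ (fun j => if h : (j : ℕ) < i then σ ⟨j, h⟩ else τ ⟨(j : ℕ) - i, by omega⟩)

/-- The `n`-th tensor power of a weighted `k`-uniform hypergraph `μ` on `V`: the weight of a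
`k`-tuple of vertices of `V^n` is the product over the coordinates `j ∈ Fin n` of the weight
of the `j`-th column. -/
noncomputable def tensorPow {V : Type*} [Fintype V] {k : ℕ} (μ : (Fin k → V) → ℝ)
    (n : ℕ) (τ : Fin k → (Fin n → V)) : ℝ :=
  ∏ j : Fin n, μ (fun i => τ i j)



open Finset in
lemma spec_decomp {V : Type*} [Fintype V] [DecidableEq V] (A : V → V → ℝ)
    (hsym : ∀ u v, A u v = A v u) :
    ∃ (e : V → V → ℝ) (μ : V → ℝ),
      (∀ u v, A u v = ∑ i, μ i * e i u * e i v) ∧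
      (∀ i j, (∑ u, e i u * e j u) = if i = j then (1:ℝ) else 0) ∧
      (∀ u v, (∑ i, e i u * e i v) = if u = v then (1:ℝ) else 0) := by
  set M : Matrix V V ℝ := Matrix.of A with hM
  have hHerm : M.IsHermitian := by
    ext u v
    simp [hM, Matrix.conjTranspose_apply, hsym u v]
  set U : Matrix V V ℝ := (Matrix.IsHermitian.eigenvectorUnitary hHerm : Matrix V V ℝ) with hU
  refine ⟨fun i u => U u i, hHerm.eigenvalues, ?_, ?_, ?_⟩
  · intro u v
    have h := hHerm.spectral_theorem
    have h2 : M u v = ∑ i, U u i * hHerm.eigenvalues i * U v i := by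
      conv_lhs => rw [h, Unitary.conjStarAlgAut_apply]
      rw [Matrix.mul_apply]
      refine Finset.sum_congr rfl fun i _ => ?_
      rw [Matrix.mul_apply, Finset.sum_mul]
      rw [Finset.sum_eq_single i]
      · simp [Matrix.diagonal, Matrix.star_apply, hU, Matrix.IsHermitian.eigenvectorUnitary_apply]
      · intro b _ hb
        simp [Matrix.diagonal_apply_ne _ hb]
      · simp
    simpa [hM, mul_comm, mul_assoc, mul_left_comm] using h2
  · intro i j
    have h : (star U * U) i j = (1 : Matrix V V ℝ) i j := by
      rw [(Matrix.mem_unitaryGroup_iff').mp (Matrix.IsHermitian.eigenvectorUnitary hHerm).2]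
    simpa [Matrix.mul_apply, Matrix.star_apply, Matrix.one_apply, mul_comm] using h
  · intro u v
    have h : (U * star U) u v = (1 : Matrix V V ℝ) u v := by
      rw [(Matrix.mem_unitaryGroup_iff).mp (Matrix.IsHermitian.eigenvectorUnitary hHerm).2]
    simpa [Matrix.mul_apply, Matrix.star_apply, Matrix.one_apply] using h


lemma prod_bound {ι : Type*} (lam : ℝ) (h1 : -1 ≤ lam) (h0 : lam ≤ 0)
    (s : Finset ι) (f : ι → ℝ) (hf : ∀ i ∈ s, lam ≤ f i ∧ f i ≤ 1) :
    lam ≤ ∏ i ∈ s, f i ∧ (-1:ℝ) ≤ ∏ i ∈ s, f i ∧ ∏ i ∈ s, f i ≤ 1 := by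
  induction s using Finset.cons_induction with
  | empty =>
    simp only [Finset.prod_empty]
    exact ⟨by linarith, by linarith, le_refl 1⟩
  | cons a s ha ih =>
    obtain ⟨hl, hm, hu⟩ := ih (fun i hi => hf i (by simp [hi]))
    obtain ⟨hal, hau⟩ := hf a (Finset.mem_cons_self a s)
    rw [Finset.prod_cons]
    have ham : (-1:ℝ) ≤ f a := le_trans h1 hal
    set p := ∏ i ∈ s, f i
    refine ⟨?_, ?_, ?_⟩
    · rcases le_or_gt 0 (f a) with h | h
      · nlinarith
      · nlinarith
    · rcases le_or_gt 0 (f a) with h | h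
      · nlinarith
      · nlinarith
    · rcases le_or_gt 0 (f a) with h | h
      · nlinarith
      · nlinarith

lemma tensor_matrix {n : ℕ} {V : Type*} [Fintype V] [DecidableEq V]
    (A : Fin n → V → V → ℝ) (lam : ℝ) (h1 : -1 ≤ lam) (h0 : lam ≤ 0)
    (hsym : ∀ j u v, A j u v = A j v u)
    (hlow : ∀ j (g : V → ℝ), lam * ∑ u, g u ^ 2 ≤ ∑ u, ∑ v, A j u v * g u * g v)
    (hup : ∀ j (g : V → ℝ), (∑ u, ∑ v, A j u v * g u * g v) ≤ ∑ u, g u ^ 2)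
    (g : (Fin n → V) → ℝ) :
    lam * ∑ x, g x ^ 2 ≤ ∑ x, ∑ y, (∏ j, A j (x j) (y j)) * g x * g y := by
  have hc : ∀ j : Fin n, ∃ (e : V → V → ℝ) (μ : V → ℝ),
      (∀ u v, A j u v = ∑ i, μ i * e i u * e i v) ∧
      (∀ i i', (∑ u, e i u * e i' u) = if i = i' then (1:ℝ) else 0) ∧
      (∀ u v, (∑ i, e i u * e i v) = if u = v then (1:ℝ) else 0) :=
    fun j => spec_decomp (A j) (hsym j)
  choose e μ hdec horth hpars using hc
  have heig : ∀ j i, lam ≤ μ j i ∧ μ j i ≤ 1 := by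
    intro j i
    have key : (∑ u, ∑ v, A j u v * e j i u * e j i v) = μ j i := by
      calc (∑ u, ∑ v, A j u v * e j i u * e j i v)
          = ∑ u, ∑ v, ∑ t, μ j t * (e j t u * e j i u) * (e j t v * e j i v) := by
            refine Finset.sum_congr rfl fun u _ => Finset.sum_congr rfl fun v _ => ?_
            rw [hdec j u v, Finset.sum_mul, Finset.sum_mul]
            exact Finset.sum_congr rfl fun t _ => by ring
        _ = ∑ u, ∑ t, ∑ v, μ j t * (e j t u * e j i u) * (e j t v * e j i v) :=
            Finset.sum_congr rfl fun u _ => Finset.sum_comm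
        _ = ∑ t, ∑ u, ∑ v, μ j t * (e j t u * e j i u) * (e j t v * e j i v) :=
            Finset.sum_comm
        _ = ∑ t, μ j t * (∑ u, e j t u * e j i u) * (∑ v, e j t v * e j i v) := by
            refine Finset.sum_congr rfl fun t _ => ?_
            calc (∑ u, ∑ v, μ j t * (e j t u * e j i u) * (e j t v * e j i v))
                = ∑ u, (μ j t * (e j t u * e j i u)) * (∑ v, e j t v * e j i v) :=
                  Finset.sum_congr rfl fun u _ => by rw [← Finset.mul_sum]
              _ = (∑ u, μ j t * (e j t u * e j i u)) * (∑ v, e j t v * e j i v) := by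
                  rw [← Finset.sum_mul]
              _ = (μ j t * ∑ u, e j t u * e j i u) * (∑ v, e j t v * e j i v) := by
                  rw [← Finset.mul_sum]
        _ = μ j i := by
            rw [Finset.sum_eq_single i]
            · rw [horth j i i, if_pos rfl]; ring
            · intro t _ ht
              rw [horth j t i, if_neg ht]; ring
            · simp
    have hn : (∑ u, (e j i u) ^ 2) = 1 := by
      have h2 := horth j i i
      rw [if_pos rfl] at h2
      rw [← h2]
      exact Finset.sum_congr rfl fun u _ => by ring
    constructor
    · have := hlow j (e j i)
      rw [hn, key] at this; linarith
    · have := hup j (e j i)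
      rw [hn, key] at this; linarith
  set c : (Fin n → V) → ℝ := fun ξ => ∑ x, g x * ∏ j, e j (ξ j) (x j) with hcdef
  have claim1 : (∑ x, ∑ y, (∏ j, A j (x j) (y j)) * g x * g y)
      = ∑ ξ : Fin n → V, (∏ j, μ j (ξ j)) * c ξ ^ 2 := by
    have hexp : ∀ x y : Fin n → V, (∏ j, A j (x j) (y j))
        = ∑ ξ : Fin n → V, (∏ j, μ j (ξ j)) * (∏ j, e j (ξ j) (x j)) * (∏ j, e j (ξ j) (y j)) := by
      intro x y
      calc (∏ j, A j (x j) (y j))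
          = ∏ j, ∑ t, μ j t * e j t (x j) * e j t (y j) :=
            Finset.prod_congr rfl fun j _ => hdec j (x j) (y j)
        _ = ∑ ξ : Fin n → V, ∏ j, (μ j (ξ j) * e j (ξ j) (x j) * e j (ξ j) (y j)) :=
            Fintype.prod_sum _
        _ = _ := by
            refine Finset.sum_congr rfl fun ξ _ => ?_
            rw [Finset.prod_mul_distrib, Finset.prod_mul_distrib]
    calc (∑ x, ∑ y, (∏ j, A j (x j) (y j)) * g x * g y)
        = ∑ x, ∑ y, ∑ ξ : Fin n → V,
            ((∏ j, μ j (ξ j)) * ((g x * ∏ j, e j (ξ j) (x j)) * (g y * ∏ j, e j (ξ j) (y j)))) := by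
          refine Finset.sum_congr rfl fun x _ => Finset.sum_congr rfl fun y _ => ?_
          rw [hexp x y, Finset.sum_mul, Finset.sum_mul]
          exact Finset.sum_congr rfl fun ξ _ => by ring
      _ = ∑ x, ∑ ξ : Fin n → V, ∑ y,
            ((∏ j, μ j (ξ j)) * ((g x * ∏ j, e j (ξ j) (x j)) * (g y * ∏ j, e j (ξ j) (y j)))) :=
          Finset.sum_congr rfl fun x _ => Finset.sum_comm
      _ = ∑ ξ : Fin n → V, ∑ x, ∑ y,
            ((∏ j, μ j (ξ j)) * ((g x * ∏ j, e j (ξ j) (x j)) * (g y * ∏ j, e j (ξ j) (y j)))) :=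
          Finset.sum_comm
      _ = ∑ ξ : Fin n → V, (∏ j, μ j (ξ j)) * c ξ ^ 2 := by
          refine Finset.sum_congr rfl fun ξ _ => ?_
          simp only [hcdef]
          rw [sq, Finset.sum_mul_sum]
          simp only [Finset.mul_sum]
  have claim2 : (∑ ξ : Fin n → V, c ξ ^ 2) = ∑ x, g x ^ 2 := by
    calc (∑ ξ : Fin n → V, c ξ ^ 2)
        = ∑ ξ : Fin n → V, ∑ x, ∑ y,
            (g x * g y * ∏ j, (e j (ξ j) (x j) * e j (ξ j) (y j))) := by
          refine Finset.sum_congr rfl fun ξ _ => ?_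
          simp only [hcdef]
          rw [sq, Finset.sum_mul_sum]
          refine Finset.sum_congr rfl fun x _ => Finset.sum_congr rfl fun y _ => ?_
          rw [Finset.prod_mul_distrib]; ring
      _ = ∑ x, ∑ ξ : Fin n → V, ∑ y,
            (g x * g y * ∏ j, (e j (ξ j) (x j) * e j (ξ j) (y j))) := Finset.sum_comm
      _ = ∑ x, ∑ y, ∑ ξ : Fin n → V,
            (g x * g y * ∏ j, (e j (ξ j) (x j) * e j (ξ j) (y j))) :=
          Finset.sum_congr rfl fun x _ => Finset.sum_comm
      _ = ∑ x, ∑ y, (g x * g y * if x = y then (1:ℝ) else 0) := by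
          refine Finset.sum_congr rfl fun x _ => Finset.sum_congr rfl fun y _ => ?_
          rw [← Finset.mul_sum]
          congr 1
          have hps : (∑ ξ : Fin n → V, ∏ j, (e j (ξ j) (x j) * e j (ξ j) (y j)))
              = ∏ j, ∑ t, e j t (x j) * e j t (y j) :=
            (Fintype.prod_sum fun j t => e j t (x j) * e j t (y j)).symm
          rw [hps]
          calc (∏ j, ∑ t, e j t (x j) * e j t (y j))
              = ∏ j, if x j = y j then (1:ℝ) else 0 :=
                Finset.prod_congr rfl fun j _ => hpars j (x j) (y j)
            _ = if x = y then (1:ℝ) else 0 := by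
                by_cases hxy : x = y
                · subst hxy; simp
                · rw [if_neg hxy]
                  obtain ⟨j, hj⟩ := Function.ne_iff.1 hxy
                  exact Finset.prod_eq_zero (Finset.mem_univ j) (if_neg hj)
      _ = ∑ x, g x ^ 2 := by
          refine Finset.sum_congr rfl fun x _ => ?_
          simp [mul_ite, mul_one, mul_zero, Finset.sum_ite_eq', sq]
  rw [claim1, ← claim2, Finset.mul_sum]
  refine Finset.sum_le_sum fun ξ _ => ?_
  have hb := (prod_bound lam h1 h0 Finset.univ (fun j => μ j (ξ j))
    (fun j _ => heig j (ξ j))).1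
  have := sq_nonneg (c ξ)
  nlinarith


lemma kernel_half {V : Type*} [Fintype V] (w : V → V → ℝ)
    (hsym : ∀ u v, w u v = w v u) (f : V → ℝ) :
    (∑ u, ∑ v, w u v * ((f u ^ 2 + f v ^ 2) / 2)) = ∑ v, (∑ u, w v u) * f v ^ 2 := by
  have key : ∀ (g : V → ℝ), (∑ u, ∑ v, w u v * g v) = ∑ v, (∑ u, w v u) * g v := by
    intro g
    rw [Finset.sum_comm]
    refine Finset.sum_congr rfl fun v _ => ?_
    rw [Finset.sum_mul]
    exact Finset.sum_congr rfl fun u _ => by rw [hsym]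
  calc (∑ u, ∑ v, w u v * ((f u ^ 2 + f v ^ 2) / 2))
      = ∑ u, ((∑ v, w u v * (f u ^2 / 2)) + (∑ v, w u v * (f v ^2 / 2))) := by
        refine Finset.sum_congr rfl fun u _ => ?_
        rw [← Finset.sum_add_distrib]
        exact Finset.sum_congr rfl fun v _ => by ring
    _ = (∑ u, (∑ v, w u v) * (f u ^2/2)) + (∑ u, ∑ v, w u v * (f v ^2/2)) := by
        rw [Finset.sum_add_distrib]
        congr 1
        exact Finset.sum_congr rfl fun u _ => by rw [Finset.sum_mul]
    _ = (∑ u, (∑ v, w u v) * (f u ^2/2)) + (∑ v, (∑ u, w v u) * (f v ^2/2)) := by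
        rw [key (fun v => f v ^2/2)]
    _ = ∑ v, (∑ u, w v u) * f v ^ 2 := by
        rw [← Finset.sum_add_distrib]
        refine Finset.sum_congr rfl fun v _ => ?_
        ring

lemma kernel_up {V : Type*} [Fintype V] (w : V → V → ℝ)
    (hsym : ∀ u v, w u v = w v u) (hnn : ∀ u v, 0 ≤ w u v) (f : V → ℝ) :
    (∑ u, ∑ v, w u v * f u * f v) ≤ ∑ v, (∑ u, w v u) * f v ^ 2 := by
  rw [← kernel_half w hsym f]
  refine Finset.sum_le_sum fun u _ => Finset.sum_le_sum fun v _ => ?_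
  nlinarith [hnn u v, sq_nonneg (f u - f v)]

lemma kernel_low {V : Type*} [Fintype V] (w : V → V → ℝ)
    (hsym : ∀ u v, w u v = w v u) (hnn : ∀ u v, 0 ≤ w u v) (f : V → ℝ) :
    -(∑ v, (∑ u, w v u) * f v ^ 2) ≤ ∑ u, ∑ v, w u v * f u * f v := by
  rw [← kernel_half w hsym f, ← Finset.sum_neg_distrib]
  refine Finset.sum_le_sum fun u _ => ?_
  rw [← Finset.sum_neg_distrib]
  refine Finset.sum_le_sum fun v _ => ?_
  nlinarith [hnn u v, sq_nonneg (f u + f v)]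

lemma rowsum_nonneg {V : Type*} [Fintype V] {w : V → V → ℝ} (hnn : ∀ u v, 0 ≤ w u v) (v : V) :
    0 ≤ ∑ u, w v u := Finset.sum_nonneg fun _ _ => hnn _ _

lemma tensor_kernel {n : ℕ} {V : Type*} [Fintype V] [DecidableEq V]
    (w : Fin n → V → V → ℝ) (lam : ℝ) (hlam : lam ≤ 0)
    (hsym : ∀ j u v, w j u v = w j v u) (hnn : ∀ j u v, 0 ≤ w j u v)
    (hsp : ∀ j (f : V → ℝ),
      lam * (∑ v, (∑ u, w j v u) * f v ^ 2) ≤ ∑ u, ∑ v, w j u v * f u * f v)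
    (f : (Fin n → V) → ℝ) :
    lam * (∑ x : Fin n → V, (∑ y : Fin n → V, ∏ j, w j (x j) (y j)) * f x ^ 2)
      ≤ ∑ x : Fin n → V, ∑ y : Fin n → V, (∏ j, w j (x j) (y j)) * f x * f y := by
  set lam' : ℝ := max lam (-1) with hlam'
  have hl1 : -1 ≤ lam' := le_max_right _ _
  have hl0 : lam' ≤ 0 := max_le hlam (by norm_num)
  have hll : lam ≤ lam' := le_max_left _ _
  set d : Fin n → V → ℝ := fun j v => ∑ u, w j v u with hd
  have hdnn : ∀ j v, 0 ≤ d j v := fun j v => rowsum_nonneg (hnn j) v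
  have hw0 : ∀ j u v, d j u = 0 → w j u v = 0 := by
    intro j u v h
    have := (Finset.sum_eq_zero_iff_of_nonneg (fun x _ => hnn j u x)).1 h
    exact this v (Finset.mem_univ v)
  have hw0' : ∀ j u v, d j v = 0 → w j u v = 0 := by
    intro j u v h
    rw [hsym]
    exact hw0 j v u h
  set A : Fin n → V → V → ℝ := fun j u v =>
    if 0 < d j u ∧ 0 < d j v then w j u v / (Real.sqrt (d j u) * Real.sqrt (d j v)) else 0
    with hA
  have hAsym : ∀ j u v, A j u v = A j v u := by
    intro j u v
    simp only [hA]
    by_cases h : 0 < d j u ∧ 0 < d j v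
    · rw [if_pos h, if_pos ⟨h.2, h.1⟩, hsym]
      ring
    · rw [if_neg h, if_neg (fun hh => h ⟨hh.2, hh.1⟩)]
  -- transfer from A-quadratic form to w-quadratic form
  have htrans : ∀ j (g : V → ℝ),
      (∑ u, ∑ v, A j u v * g u * g v)
        = ∑ u, ∑ v, w j u v * (fun x => if h : 0 < d j x then g x / Real.sqrt (d j x) else 0) u
            * (fun x => if h : 0 < d j x then g x / Real.sqrt (d j x) else 0) v := by
    intro j g
    refine Finset.sum_congr rfl fun u _ => Finset.sum_congr rfl fun v _ => ?_
    simp only [hA]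
    by_cases hu : 0 < d j u
    · by_cases hv : 0 < d j v
      · rw [if_pos ⟨hu, hv⟩, dif_pos hu, dif_pos hv]
        have s1 : Real.sqrt (d j u) ≠ 0 := ne_of_gt (Real.sqrt_pos.2 hu)
        have s2 : Real.sqrt (d j v) ≠ 0 := ne_of_gt (Real.sqrt_pos.2 hv)
        field_simp
        try ring
      · rw [if_neg (fun hh => hv hh.2), dif_neg hv,
          hw0' j u v (le_antisymm (not_lt.1 hv) (hdnn j v)).symm.symm]
        try ring
    · rw [if_neg (fun hh => hu hh.1), dif_neg hu,
        hw0 j u v (le_antisymm (not_lt.1 hu) (hdnn j u)).symm.symm]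
      try ring
  have hDle : ∀ j (g : V → ℝ),
      (∑ v, d j v * ((fun x => if h : 0 < d j x then g x / Real.sqrt (d j x) else 0) v) ^ 2)
        ≤ ∑ v, g v ^ 2 := by
    intro j g
    refine Finset.sum_le_sum fun v _ => ?_
    beta_reduce
    by_cases hv : 0 < d j v
    · rw [dif_pos hv, div_pow, Real.sq_sqrt (hdnn j v)]
      rw [mul_div_assoc', mul_comm, mul_div_assoc, div_self (ne_of_gt hv), mul_one]
    · rw [dif_neg hv]
      simp [sq_nonneg]
  have hAlow : ∀ j (g : V → ℝ), lam' * ∑ u, g u ^ 2 ≤ ∑ u, ∑ v, A j u v * g u * g v := by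
    intro j g
    rw [htrans j g]
    set fg := fun x => if h : 0 < d j x then g x / Real.sqrt (d j x) else 0
    have hD1 : (∑ v, d j v * fg v ^ 2) ≤ ∑ v, g v ^ 2 := hDle j g
    have hDnn : 0 ≤ ∑ v, d j v * fg v ^ 2 :=
      Finset.sum_nonneg fun v _ => mul_nonneg (hdnn j v) (sq_nonneg _)
    have hone : (∑ v, (∑ u, w j v u) * fg v ^ 2) = ∑ v, d j v * fg v ^ 2 := rfl
    rcases max_cases lam (-1) with ⟨hmx, _⟩ | ⟨hmx, _⟩
    · have h1 := hsp j fg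
      rw [hone] at h1
      calc lam' * ∑ u, g u ^ 2 ≤ lam' * ∑ v, d j v * fg v ^ 2 := by
            rw [hlam', hmx]
            exact mul_le_mul_of_nonpos_left hD1 (hmx ▸ hl0)
        _ ≤ _ := by rw [hlam', hmx]; exact h1
    · have h1 := kernel_low (w j) (hsym j) (hnn j) fg
      rw [hone] at h1
      calc lam' * ∑ u, g u ^ 2 ≤ lam' * ∑ v, d j v * fg v ^ 2 := by
            exact mul_le_mul_of_nonpos_left hD1 hl0
        _ = -(∑ v, d j v * fg v ^ 2) * (-lam') := by ring
        _ ≤ -(∑ v, d j v * fg v ^ 2) * 1 := by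
            rcases le_or_gt (-(∑ v, d j v * fg v ^ 2)) 0 with h | h
            · nlinarith
            · nlinarith
        _ = -(∑ v, d j v * fg v ^ 2) := by ring
        _ ≤ _ := h1
  have hAup : ∀ j (g : V → ℝ), (∑ u, ∑ v, A j u v * g u * g v) ≤ ∑ u, g u ^ 2 := by
    intro j g
    rw [htrans j g]
    set fg := fun x => if h : 0 < d j x then g x / Real.sqrt (d j x) else 0
    have h1 := kernel_up (w j) (hsym j) (hnn j) fg
    exact le_trans h1 (hDle j g)
  -- key: A * sqrt d * sqrt d = w
  have hkey : ∀ j u v, A j u v * Real.sqrt (d j u) * Real.sqrt (d j v) = w j u v := by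
    intro j u v
    simp only [hA]
    by_cases hu : 0 < d j u
    · by_cases hv : 0 < d j v
      · rw [if_pos ⟨hu, hv⟩]
        have s1 : Real.sqrt (d j u) ≠ 0 := ne_of_gt (Real.sqrt_pos.2 hu)
        have s2 : Real.sqrt (d j v) ≠ 0 := ne_of_gt (Real.sqrt_pos.2 hv)
        field_simp
        try ring
      · rw [if_neg (fun hh => hv hh.2), hw0' j u v (le_antisymm (not_lt.1 hv) (hdnn j v)).symm.symm]
        try ring
    · rw [if_neg (fun hh => hu hh.1), hw0 j u v (le_antisymm (not_lt.1 hu) (hdnn j u)).symm.symm]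
      try ring
  set G : (Fin n → V) → ℝ := fun x => f x * ∏ j, Real.sqrt (d j (x j)) with hG
  have hmain := tensor_matrix A lam' hl1 hl0 hAsym hAlow hAup G
  have hGsq : ∀ x, G x ^ 2 = f x ^ 2 * ∏ j, d j (x j) := by
    intro x
    rw [hG]
    simp only []
    rw [mul_pow, ← Finset.prod_pow]
    congr 1
    exact Finset.prod_congr rfl fun j _ => Real.sq_sqrt (hdnn j (x j))
  have hterm : ∀ x y : Fin n → V,
      (∏ j, A j (x j) (y j)) * G x * G y = (∏ j, w j (x j) (y j)) * f x * f y := by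
    intro x y
    rw [hG]
    simp only []
    calc (∏ j, A j (x j) (y j)) * (f x * ∏ j, Real.sqrt (d j (x j)))
          * (f y * ∏ j, Real.sqrt (d j (y j)))
        = ((∏ j, A j (x j) (y j)) * (∏ j, Real.sqrt (d j (x j)))
            * (∏ j, Real.sqrt (d j (y j)))) * f x * f y := by ring
      _ = (∏ j, A j (x j) (y j) * Real.sqrt (d j (x j)) * Real.sqrt (d j (y j))) * f x * f y := by
          rw [Finset.prod_mul_distrib, Finset.prod_mul_distrib]
      _ = (∏ j, w j (x j) (y j)) * f x * f y := by
          congr 1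
          congr 1
          exact Finset.prod_congr rfl fun j _ => hkey j (x j) (y j)
  have hrow : ∀ x : Fin n → V, (∑ y : Fin n → V, ∏ j, w j (x j) (y j)) = ∏ j, d j (x j) := by
    intro x
    rw [hd]
    simp only []
    exact (Fintype.prod_sum (fun j u => w j (x j) u)).symm
  calc lam * (∑ x : Fin n → V, (∑ y : Fin n → V, ∏ j, w j (x j) (y j)) * f x ^ 2)
      = lam * (∑ x : Fin n → V, f x ^ 2 * ∏ j, d j (x j)) := by
        congr 1
        exact Finset.sum_congr rfl fun x _ => by rw [hrow x]; ring
    _ ≤ lam' * (∑ x : Fin n → V, f x ^ 2 * ∏ j, d j (x j)) := by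
        have hXnn : 0 ≤ ∑ x : Fin n → V, f x ^ 2 * ∏ j, d j (x j) :=
          Finset.sum_nonneg fun x _ => mul_nonneg (sq_nonneg _)
            (Finset.prod_nonneg fun j _ => hdnn j (x j))
        exact mul_le_mul_of_nonneg_right hll hXnn
    _ = lam' * ∑ x, G x ^ 2 := by
        congr 1
        exact Finset.sum_congr rfl fun x _ => (hGsq x).symm
    _ ≤ ∑ x, ∑ y, (∏ j, A j (x j) (y j)) * G x * G y := hmain
    _ = ∑ x, ∑ y, (∏ j, w j (x j) (y j)) * f x * f y :=
        Finset.sum_congr rfl fun x _ => Finset.sum_congr rfl fun y _ => hterm x y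


lemma snoc_eval {V : Type*} {m : ℕ} (σ : Fin m → V) (x : V) (j : Fin (m+1)) :
    (Fin.snoc σ x : Fin (m+1) → V) j = if h : (j : ℕ) < m then σ ⟨j, h⟩ else x := by
  by_cases hc : (j:ℕ) < m
  · rw [dif_pos hc]
    conv_lhs => rw [show j = Fin.castSucc ⟨(j:ℕ), hc⟩ from Fin.ext rfl]
    exact Fin.snoc_castSucc (α := fun _ => V) x σ ⟨(j:ℕ), hc⟩
  · rw [dif_neg hc]
    conv_lhs => rw [show j = Fin.last m from Fin.ext (by simp only [Fin.val_last]; omega)]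
    exact Fin.snoc_last (α := fun _ => V) x σ

lemma marg_nonneg {V : Type*} [Fintype V] {k : ℕ} {μ : (Fin k → V) → ℝ}
    (hnn : ∀ τ, 0 ≤ μ τ) {i : ℕ} (hik : i ≤ k) (σ : Fin i → V) :
    0 ≤ marg μ i hik σ :=
  Finset.sum_nonneg fun _ _ => hnn _

lemma marg_zero {V : Type*} [Fintype V] {k : ℕ} (μ : (Fin k → V) → ℝ)
    (h : (0:ℕ) ≤ k) (σ : Fin 0 → V) :
    marg μ 0 h σ = ∑ τ : Fin k → V, μ τ := by
  unfold marg
  exact Finset.sum_congr rfl fun τ _ => rfl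

lemma marg_top {V : Type*} [Fintype V] {k i : ℕ} (μ : (Fin k → V) → ℝ)
    (hik : i ≤ k) (hki : k ≤ i) (σ : Fin i → V) :
    marg μ i hik σ = μ (fun j => σ ⟨(j : ℕ), lt_of_lt_of_le j.isLt hki⟩) := by
  unfold marg
  haveI he : IsEmpty (Fin (k - i)) := by
    rw [Nat.sub_eq_zero_of_le (le_antisymm hik hki).ge]
    exact Fin.isEmpty'
  rw [Fintype.sum_eq_single (default : Fin (k-i) → V)
    (fun x hx => absurd (Subsingleton.elim x default) hx)]
  congr 1
  funext j
  rw [dif_pos (lt_of_lt_of_le j.isLt hki)]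

lemma marg_succ {V : Type*} [Fintype V] {k i : ℕ} (μ : (Fin k → V) → ℝ)
    (hik : i ≤ k) (h1 : i + 1 ≤ k) (σ : Fin i → V) :
    marg μ i hik σ = ∑ v : V, marg μ (i+1) h1 (Fin.snoc σ v) := by
  unfold marg
  have hpos : 0 < k - i := by omega
  let E : (V × (Fin (k-(i+1)) → V)) ≃ (Fin (k-i) → V) :=
    { toFun := fun p t => if h : (t:ℕ) = 0 then p.1 else p.2 ⟨(t:ℕ) - 1, by omega⟩
      invFun := fun ρ => (ρ ⟨0, hpos⟩, fun s => ρ ⟨(s:ℕ)+1, by omega⟩)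
      left_inv := by
        rintro ⟨v, τ⟩
        refine Prod.ext ?_ ?_
        · simp
        · funext s
          simp only [dif_neg (Nat.succ_ne_zero (s:ℕ))]
          exact congrArg τ (Fin.ext rfl)
      right_inv := by
        intro ρ
        funext t
        by_cases ht : (t:ℕ) = 0
        · simp only [dif_pos ht]
          congr 1
          exact Fin.ext (by simp [ht])
        · simp only [dif_neg ht]
          congr 1
          exact Fin.ext (show ((t:ℕ) - 1) + 1 = (t:ℕ) by omega) }
  rw [← Equiv.sum_comp E (fun ρ : Fin (k-i) → V =>
        μ (fun j => if h : (j:ℕ) < i then σ ⟨j,h⟩ else ρ ⟨(j:ℕ)-i, by omega⟩))]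
  rw [Fintype.sum_prod_type]
  refine Finset.sum_congr rfl fun v _ => Finset.sum_congr rfl fun τ _ => ?_
  congr 1
  funext j
  by_cases h1j : (j:ℕ) < i
  · rw [dif_pos h1j, dif_pos (by omega : (j:ℕ) < i+1), snoc_eval, dif_pos h1j]
  · by_cases h2j : (j:ℕ) < i + 1
    · rw [dif_neg h1j, dif_pos h2j, snoc_eval, dif_neg (by simp; omega)]
      show E (v, τ) ⟨(j:ℕ) - i, _⟩ = v
      simp only [E, Equiv.coe_fn_mk]
      rw [dif_pos (show ((j:ℕ) - i) = 0 by omega)]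
    · rw [dif_neg h1j, dif_neg h2j]
      show E (v, τ) ⟨(j:ℕ) - i, _⟩ = τ _
      simp only [E, Equiv.coe_fn_mk]
      rw [dif_neg (show ¬((j:ℕ) - i) = 0 by omega)]
      exact congrArg τ (Fin.ext (show (j:ℕ) - i - 1 = (j:ℕ) - (i+1) by omega))

lemma marg_tensorPow {V : Type*} [Fintype V] {k : ℕ} (μ : (Fin k → V) → ℝ) (n : ℕ)
    {i : ℕ} (hik : i ≤ k) (σ : Fin i → (Fin n → V)) :
    marg (tensorPow μ n) i hik σ = ∏ j : Fin n, marg μ i hik (fun t => σ t j) := by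
  unfold marg tensorPow
  calc (∑ τ : Fin (k - i) → (Fin n → V), ∏ j : Fin n,
          μ (fun t : Fin k => (if h : (t:ℕ) < i then σ ⟨t, h⟩ else τ ⟨(t:ℕ) - i, by omega⟩) j))
      = ∑ τ : Fin (k - i) → (Fin n → V), ∏ j : Fin n,
          μ (fun t : Fin k => if h : (t:ℕ) < i then σ ⟨t, h⟩ j else τ ⟨(t:ℕ) - i, by omega⟩ j) := by
        refine Finset.sum_congr rfl fun τ _ => Finset.prod_congr rfl fun j _ => ?_
        congr 1
        funext t
        by_cases h : (t:ℕ) < i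
        · rw [dif_pos h, dif_pos h]
        · rw [dif_neg h, dif_neg h]
    _ = ∑ τ' : Fin n → (Fin (k - i) → V), ∏ j : Fin n,
          μ (fun t : Fin k => if h : (t:ℕ) < i then σ ⟨t, h⟩ j else τ' j ⟨(t:ℕ) - i, by omega⟩) := by
        exact Fintype.sum_equiv
          ⟨Function.swap, Function.swap, fun _ => rfl, fun _ => rfl⟩
          _ _ (fun τ => rfl)
    _ = ∏ j : Fin n, ∑ ρ : Fin (k - i) → V,
          μ (fun t : Fin k => if h : (t:ℕ) < i then σ ⟨t, h⟩ j else ρ ⟨(t:ℕ) - i, by omega⟩) :=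
        (Fintype.prod_sum (fun (j : Fin n) (ρ : Fin (k - i) → V) =>
          μ (fun t : Fin k => if h : (t:ℕ) < i then σ ⟨t, h⟩ j
            else ρ ⟨(t:ℕ) - i, by omega⟩))).symm
    _ = ∏ j : Fin n, ∑ ρ : Fin (k - i) → V,
          μ (fun t : Fin k => if h : (t:ℕ) < i then (fun s => σ s j) ⟨t, h⟩ else ρ ⟨(t:ℕ) - i, by omega⟩) :=
        rfl

lemma snoc_col {V : Type*} {n m : ℕ} (g : Fin m → (Fin n → V)) (x : Fin n → V) (j : Fin n) :
    (fun t : Fin (m+1) => (Fin.snoc g x : Fin (m+1) → (Fin n → V)) t j)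
      = Fin.snoc (fun t => g t j) (x j) := by
  funext t
  rw [snoc_eval, snoc_eval]
  by_cases h : (t:ℕ) < m
  · rw [dif_pos h, dif_pos h]
  · rw [dif_neg h, dif_neg h]

lemma marg_swap {V : Type*} [Fintype V] {k : ℕ} (μ : (Fin k → V) → ℝ)
    (hsymm : ∀ (π : Equiv.Perm (Fin k)) (τ : Fin k → V), μ (τ ∘ π) = μ τ)
    {i : ℕ} (h2 : i + 2 ≤ k) (σ : Fin i → V) (u v : V) :
    marg μ (i+2) h2 (Fin.snoc (Fin.snoc σ u) v) = marg μ (i+2) h2 (Fin.snoc (Fin.snoc σ v) u) := by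
  have evalUV : ∀ (u v : V) (jv : ℕ) (h : jv < i + 2),
      (Fin.snoc (Fin.snoc σ u) v : Fin (i+2) → V) ⟨jv, h⟩
        = if h' : jv < i then σ ⟨jv, h'⟩ else if jv = i then u else v := by
    intro u v jv h
    rw [snoc_eval]
    by_cases h1 : jv < i + 1
    · rw [dif_pos (show ((⟨jv, h⟩ : Fin (i+2)):ℕ) < i + 1 from h1), snoc_eval]
      by_cases h0 : jv < i
      · rw [dif_pos (show ((⟨jv, h1⟩ : Fin (i+1)):ℕ) < i from h0), dif_pos h0]
      · rw [dif_neg (show ¬((⟨jv, h1⟩ : Fin (i+1)):ℕ) < i from h0), dif_neg h0,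
          if_pos (show jv = i by omega)]
    · rw [dif_neg (show ¬((⟨jv, h⟩ : Fin (i+2)):ℕ) < i + 1 from h1),
        dif_neg (show ¬ jv < i by omega), if_neg (show ¬ jv = i by omega)]
  unfold marg
  refine Finset.sum_congr rfl fun τ _ => ?_
  have hi : i < k := by omega
  have hi1 : i + 1 < k := by omega
  rw [← hsymm (Equiv.swap ⟨i, hi⟩ ⟨i+1, hi1⟩)
    (fun j => if h : (j:ℕ) < i+2 then (Fin.snoc (Fin.snoc σ v) u : Fin (i+2) → V) ⟨(j:ℕ), h⟩
      else τ ⟨(j:ℕ)-(i+2), by omega⟩)]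
  congr 1
  funext j
  simp only [Function.comp_apply]
  rcases lt_trichotomy ((j:ℕ)) i with hj | hj | hj
  · have hna : j ≠ ⟨i, hi⟩ := by
      intro hh; rw [hh] at hj; exact absurd hj (show ¬ i < i by omega)
    have hnb : j ≠ ⟨i+1, hi1⟩ := by
      intro hh; rw [hh] at hj; exact absurd hj (show ¬ i + 1 < i by omega)
    rw [Equiv.swap_apply_of_ne_of_ne hna hnb]
    rw [dif_pos (show (j:ℕ) < i + 2 by omega), dif_pos (show (j:ℕ) < i + 2 by omega)]
    rw [evalUV, evalUV, dif_pos hj, dif_pos hj]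
  · have hja : j = ⟨i, hi⟩ := Fin.ext hj
    rw [hja, Equiv.swap_apply_left]
    rw [dif_pos (show ((⟨i, hi⟩ : Fin k):ℕ) < i + 2 from (show i < i + 2 by omega)),
      dif_pos (show ((⟨i+1, hi1⟩ : Fin k):ℕ) < i + 2 from (show i + 1 < i + 2 by omega))]
    rw [evalUV, evalUV]
    rw [dif_neg (show ¬((⟨i, hi⟩ : Fin k):ℕ) < i from (show ¬ i < i by omega)),
      dif_neg (show ¬((⟨i+1, hi1⟩ : Fin k):ℕ) < i from (show ¬ i + 1 < i by omega))]
    rw [if_pos (show ((⟨i, hi⟩ : Fin k):ℕ) = i from rfl),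
      if_neg (show ¬((⟨i+1, hi1⟩ : Fin k):ℕ) = i from (show ¬ i + 1 = i by omega))]
  · by_cases hj1 : (j:ℕ) = i + 1
    · have hjb : j = ⟨i+1, hi1⟩ := Fin.ext hj1
      rw [hjb, Equiv.swap_apply_right]
      rw [dif_pos (show ((⟨i+1, hi1⟩ : Fin k):ℕ) < i + 2 from (show i + 1 < i + 2 by omega)),
        dif_pos (show ((⟨i, hi⟩ : Fin k):ℕ) < i + 2 from (show i < i + 2 by omega))]
      rw [evalUV, evalUV]
      rw [dif_neg (show ¬((⟨i+1, hi1⟩ : Fin k):ℕ) < i from (show ¬ i + 1 < i by omega)),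
        dif_neg (show ¬((⟨i, hi⟩ : Fin k):ℕ) < i from (show ¬ i < i by omega))]
      rw [if_neg (show ¬((⟨i+1, hi1⟩ : Fin k):ℕ) = i from (show ¬ i + 1 = i by omega)),
        if_pos (show ((⟨i, hi⟩ : Fin k):ℕ) = i from rfl)]
    · have hna : j ≠ ⟨i, hi⟩ := by
        intro hh; rw [hh] at hj; exact absurd hj (show ¬ i < i by omega)
      have hnb : j ≠ ⟨i+1, hi1⟩ := fun hh => hj1 (by rw [hh])
      rw [Equiv.swap_apply_of_ne_of_ne hna hnb]
      have hge : ¬ (j:ℕ) < i + 2 := by omega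
      rw [dif_neg hge, dif_neg hge]


open Classical in
lemma indsum {V : Type*} [Fintype V] (I : Finset V) (g : V → ℝ) :
    (∑ v : V, g v * (if v ∈ I then (1:ℝ) else 0)) = ∑ v ∈ I, g v := by
  rw [← Finset.sum_filter_add_sum_filter_not Finset.univ (fun v => v ∈ I)]
  rw [Finset.filter_univ_mem]
  have h2 : ∑ v ∈ Finset.univ.filter (fun v => ¬ v ∈ I), g v * (if v ∈ I then (1:ℝ) else 0) = 0 := by
    refine Finset.sum_eq_zero fun v hv => ?_
    rw [if_neg (Finset.mem_filter.1 hv).2, mul_zero]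
  rw [h2, add_zero]
  exact Finset.sum_congr rfl fun v hv => by rw [if_pos hv, mul_one]

lemma hoffman {V : Type*} [Fintype V] (k : ℕ) (hk : 2 ≤ k) (μ : (Fin k → V) → ℝ)
    (hnn : ∀ τ, 0 ≤ μ τ)
    (hswap : ∀ (i : ℕ) (h : i + 2 ≤ k) (σ : Fin i → V) (u v : V),
      marg μ (i+2) h (Fin.snoc (Fin.snoc σ u) v) = marg μ (i+2) h (Fin.snoc (Fin.snoc σ v) u))
    (lam : ℕ → ℝ) (hlam : ∀ i, i ≤ k - 2 → lam i ≤ 0)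
    (hspec : ∀ (i : ℕ) (hi : i ≤ k - 2) (σ : Fin i → V),
      0 < marg μ i (Nat.le_trans hi (Nat.sub_le k 2)) σ → ∀ f : V → ℝ,
        ∑ u, ∑ v, marg μ (i+2) (Nat.add_le_of_le_sub hk hi) (Fin.snoc (Fin.snoc σ u) v) * f u * f v ≥
          lam i * ∑ v, (∑ u, marg μ (i+2) (Nat.add_le_of_le_sub hk hi) (Fin.snoc (Fin.snoc σ v) u)) * f v ^ 2)
    (I : Finset V) (hind : ∀ τ : Fin k → V, (∀ j, τ j ∈ I) → μ τ = 0) :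
    ∑ v ∈ I, marg μ 1 (Nat.le_trans (Nat.le_succ 1) hk) (fun _ => v) ≤
      (1 - 1 / ∏ t ∈ Finset.range (k-1), (1 - lam t)) * ∑ τ, μ τ := by
  classical
  have key : ∀ (d : ℕ) (i : ℕ) (hdi : i + d + 1 = k) (σ : Fin i → V)
      (hσI : ∀ t, σ t ∈ I),
      ∑ v ∈ I, marg μ (i+1) (by omega) (Fin.snoc σ v) ≤
        (1 - 1 / ∏ t ∈ Finset.Ico i (k-1), (1 - lam t)) * marg μ i (by omega) σ := by
    intro d
    induction d with
    | zero =>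
      intro i hdi σ hσ
      have hL : ∀ v ∈ I, marg μ (i+1) (by omega) (Fin.snoc σ v) = 0 := by
        intro v hv
        rw [marg_top μ (by omega) (by omega)]
        refine hind _ fun j => ?_
        rw [snoc_eval]
        by_cases hj : ((⟨(j:ℕ), by omega⟩ : Fin (i+1)) : ℕ) < i
        · rw [dif_pos hj]; exact hσ _
        · rw [dif_neg hj]; exact hv
      rw [Finset.sum_eq_zero hL, show k - 1 = i by omega, Finset.Ico_self, Finset.prod_empty,
        show (1:ℝ) - 1/1 = 0 by norm_num, zero_mul]
    | succ d ih =>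
      intro i hdi σ hσ
      have h2k : i + 2 ≤ k := by omega
      have hik2 : i ≤ k - 2 := by omega
      have hik : i ≤ k := by omega
      have hik1 : i + 1 ≤ k := by omega
      set S : ℝ := marg μ i (by omega) σ with hSdef
      set α : ℝ := ∑ v ∈ I, marg μ (i+1) (by omega) (Fin.snoc σ v) with hαdef
      set P' : ℝ := ∏ t ∈ Finset.Ico (i+1) (k-1), (1 - lam t) with hP'def
      set B' : ℝ := 1 - 1 / P' with hB'def
      have hSnn : 0 ≤ S := marg_nonneg hnn _ _
      have hαnn : 0 ≤ α := Finset.sum_nonneg fun v _ => marg_nonneg hnn _ _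
      have hrowS : S = ∑ v : V, marg μ (i+1) (by omega) (Fin.snoc σ v) :=
        marg_succ μ hik hik1 σ
      have hαS : α ≤ S := by
        rw [hαdef, hrowS]
        exact Finset.sum_le_sum_of_subset_of_nonneg (Finset.subset_univ I)
          (fun v _ _ => marg_nonneg hnn _ _)
      have hP1 : (1:ℝ) ≤ P' := by
        rw [hP'def]
        calc (1:ℝ) = ∏ t ∈ Finset.Ico (i+1) (k-1), (1:ℝ) := (Finset.prod_const_one).symm
          _ ≤ ∏ t ∈ Finset.Ico (i+1) (k-1), (1 - lam t) := by
            refine Finset.prod_le_prod (fun t _ => zero_le_one) (fun t ht => ?_)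
            have := hlam t (by
              have := (Finset.mem_Ico.1 ht).2
              omega)
            linarith
      have hP0 : (0:ℝ) < P' := lt_of_lt_of_le one_pos hP1
      have hB'0 : 0 ≤ B' := by
        rw [hB'def]
        have : 1 / P' ≤ 1 := by
          rw [div_le_one hP0]; exact hP1
        linarith
      have hB'1 : B' ≤ 1 := by
        rw [hB'def]
        have : 0 < 1 / P' := by positivity
        linarith
      -- the β bound from induction hypothesis
      have hβ : (∑ u ∈ I, ∑ v ∈ I, marg μ (i+2) (by omega) (Fin.snoc (Fin.snoc σ u) v))
          ≤ B' * α := by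
        have h1 : ∀ u ∈ I, (∑ v ∈ I, marg μ (i+2) (by omega) (Fin.snoc (Fin.snoc σ u) v))
            ≤ B' * marg μ (i+1) (by omega) (Fin.snoc σ u) := by
          intro u hu
          have h2 := ih (i+1) (by omega) (Fin.snoc σ u) (fun t => by
            rw [snoc_eval]
            by_cases hj : ((t:ℕ)) < i
            · rw [dif_pos hj]; exact hσ _
            · rw [dif_neg hj]; exact hu)
          exact h2
        calc (∑ u ∈ I, ∑ v ∈ I, marg μ (i+2) (by omega) (Fin.snoc (Fin.snoc σ u) v))
            ≤ ∑ u ∈ I, B' * marg μ (i+1) (by omega) (Fin.snoc σ u) :=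
              Finset.sum_le_sum h1
          _ = B' * α := by rw [hαdef, Finset.mul_sum]
      have hsplit : (∏ t ∈ Finset.Ico i (k-1), (1 - lam t)) = (1 - lam i) * P' := by
        rw [hP'def]
        exact Finset.prod_eq_prod_Ico_succ_bot (by omega) _
      have hlami : lam i ≤ 0 := hlam i hik2
      have h1L : (0:ℝ) < 1 - lam i := by linarith
      rcases eq_or_lt_of_le hSnn with hS0 | hSpos
      · -- S = 0 hence α = 0
        have hα0 : α = 0 := le_antisymm (by rw [← hS0] at hαS; exact hαS) hαnn
        rw [hα0, ← hS0, mul_zero]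
      · -- main case
        set c : ℝ := α / S with hcdef
        set f : V → ℝ := fun v => (if v ∈ I then (1:ℝ) else 0) - c with hfdef
        have hsp := hspec i hik2 σ hSpos f
        set q : ℝ := α^2 / S with hqdef
        have hqS : q * S = α^2 := div_mul_cancel₀ _ (ne_of_gt hSpos)
        -- compute the quadratic form
        have hT4 : (∑ u : V, ∑ v : V, marg μ (i+2) (by omega) (Fin.snoc (Fin.snoc σ u) v)) = S := by
          rw [hrowS]
          exact Finset.sum_congr rfl fun u _ =>
            (marg_succ μ hik1 h2k (Fin.snoc σ u)).symm
        have hrow1 : ∀ u : V, (∑ v : V, marg μ (i+2) (by omega) (Fin.snoc (Fin.snoc σ u) v))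
            = marg μ (i+1) (by omega) (Fin.snoc σ u) :=
          fun u => (marg_succ μ hik1 h2k (Fin.snoc σ u)).symm
        have hT2 : (∑ u : V, ∑ v : V, marg μ (i+2) (by omega) (Fin.snoc (Fin.snoc σ u) v)
            * (if u ∈ I then (1:ℝ) else 0)) = α := by
          rw [hαdef]
          rw [← indsum I (fun u => marg μ (i+1) (by omega) (Fin.snoc σ u))]
          refine Finset.sum_congr rfl fun u _ => ?_
          rw [← Finset.sum_mul, hrow1 u]
        have hT3 : (∑ u : V, ∑ v : V, marg μ (i+2) (by omega) (Fin.snoc (Fin.snoc σ u) v)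
            * (if v ∈ I then (1:ℝ) else 0)) = α := by
          rw [Finset.sum_comm]
          rw [hαdef, ← indsum I (fun v => marg μ (i+1) (by omega) (Fin.snoc σ v))]
          refine Finset.sum_congr rfl fun v _ => ?_
          rw [← Finset.sum_mul]
          congr 1
          rw [← hrow1 v]
          exact Finset.sum_congr rfl fun u _ => hswap i h2k σ u v
        have hT1 : (∑ u : V, ∑ v : V, marg μ (i+2) (by omega) (Fin.snoc (Fin.snoc σ u) v)
            * (if u ∈ I then (1:ℝ) else 0) * (if v ∈ I then (1:ℝ) else 0))
            = ∑ u ∈ I, ∑ v ∈ I, marg μ (i+2) (by omega) (Fin.snoc (Fin.snoc σ u) v) := by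
          rw [← indsum I (fun u => ∑ v ∈ I, marg μ (i+2) (by omega) (Fin.snoc (Fin.snoc σ u) v))]
          refine Finset.sum_congr rfl fun u _ => ?_
          rw [← indsum I (fun v => marg μ (i+2) (by omega) (Fin.snoc (Fin.snoc σ u) v))]
          rw [Finset.sum_mul]
          refine Finset.sum_congr rfl fun v _ => by ring
        have hQ : (∑ u, ∑ v, marg μ (i+2) (by omega) (Fin.snoc (Fin.snoc σ u) v) * f u * f v)
            = (∑ u ∈ I, ∑ v ∈ I, marg μ (i+2) (by omega) (Fin.snoc (Fin.snoc σ u) v))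
              - 2 * c * α + c^2 * S := by
          have hterm : ∀ u v : V,
              marg μ (i+2) (by omega : i+2 ≤ k) (Fin.snoc (Fin.snoc σ u) v) * f u * f v
              = marg μ (i+2) (by omega) (Fin.snoc (Fin.snoc σ u) v)
                  * (if u ∈ I then (1:ℝ) else 0) * (if v ∈ I then (1:ℝ) else 0)
                - c * (marg μ (i+2) (by omega) (Fin.snoc (Fin.snoc σ u) v)
                    * (if u ∈ I then (1:ℝ) else 0))
                - c * (marg μ (i+2) (by omega) (Fin.snoc (Fin.snoc σ u) v)
                    * (if v ∈ I then (1:ℝ) else 0))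
                + c^2 * marg μ (i+2) (by omega) (Fin.snoc (Fin.snoc σ u) v) := by
            intro u v
            rw [hfdef]
            ring
          calc (∑ u, ∑ v, marg μ (i+2) (by omega) (Fin.snoc (Fin.snoc σ u) v) * f u * f v)
              = ∑ u, ∑ v, (marg μ (i+2) (by omega) (Fin.snoc (Fin.snoc σ u) v)
                  * (if u ∈ I then (1:ℝ) else 0) * (if v ∈ I then (1:ℝ) else 0)
                - c * (marg μ (i+2) (by omega) (Fin.snoc (Fin.snoc σ u) v)
                    * (if u ∈ I then (1:ℝ) else 0))
                - c * (marg μ (i+2) (by omega) (Fin.snoc (Fin.snoc σ u) v)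
                    * (if v ∈ I then (1:ℝ) else 0))
                + c^2 * marg μ (i+2) (by omega) (Fin.snoc (Fin.snoc σ u) v)) :=
                Finset.sum_congr rfl fun u _ => Finset.sum_congr rfl fun v _ => hterm u v
            _ = (∑ u, ∑ v, marg μ (i+2) (by omega) (Fin.snoc (Fin.snoc σ u) v)
                  * (if u ∈ I then (1:ℝ) else 0) * (if v ∈ I then (1:ℝ) else 0))
                - c * (∑ u, ∑ v, marg μ (i+2) (by omega) (Fin.snoc (Fin.snoc σ u) v)
                    * (if u ∈ I then (1:ℝ) else 0))
                - c * (∑ u, ∑ v, marg μ (i+2) (by omega) (Fin.snoc (Fin.snoc σ u) v)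
                    * (if v ∈ I then (1:ℝ) else 0))
                + c^2 * (∑ u, ∑ v, marg μ (i+2) (by omega) (Fin.snoc (Fin.snoc σ u) v)) := by
                simp only [Finset.sum_add_distrib, Finset.sum_sub_distrib, ← Finset.mul_sum]
            _ = _ := by rw [hT1, hT2, hT3, hT4]; ring
        have hD : (∑ v, (∑ u, marg μ (i+2) (by omega) (Fin.snoc (Fin.snoc σ v) u)) * f v ^ 2)
            = α - 2 * c * α + c^2 * S := by
          have hstep : ∀ v : V, (∑ u, marg μ (i+2) (by omega : i+2 ≤ k) (Fin.snoc (Fin.snoc σ v) u)) * f v ^ 2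
              = marg μ (i+1) (by omega) (Fin.snoc σ v) * (if v ∈ I then (1:ℝ) else 0)
                - 2*c*(marg μ (i+1) (by omega) (Fin.snoc σ v) * (if v ∈ I then (1:ℝ) else 0))
                + c^2 * marg μ (i+1) (by omega) (Fin.snoc σ v) := by
            intro v
            rw [hrow1 v, hfdef]
            beta_reduce
            by_cases hv : v ∈ I
            · rw [if_pos hv]; ring
            · rw [if_neg hv]; ring
          calc (∑ v, (∑ u, marg μ (i+2) (by omega) (Fin.snoc (Fin.snoc σ v) u)) * f v ^ 2)
              = ∑ v, (marg μ (i+1) (by omega) (Fin.snoc σ v) * (if v ∈ I then (1:ℝ) else 0)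
                - 2*c*(marg μ (i+1) (by omega) (Fin.snoc σ v) * (if v ∈ I then (1:ℝ) else 0))
                + c^2 * marg μ (i+1) (by omega) (Fin.snoc σ v)) :=
                Finset.sum_congr rfl fun v _ => hstep v
            _ = (∑ v, marg μ (i+1) (by omega) (Fin.snoc σ v) * (if v ∈ I then (1:ℝ) else 0))
                - 2*c*(∑ v, marg μ (i+1) (by omega) (Fin.snoc σ v) * (if v ∈ I then (1:ℝ) else 0))
                + c^2 * (∑ v, marg μ (i+1) (by omega) (Fin.snoc σ v)) := by
                simp only [Finset.sum_add_distrib, Finset.sum_sub_distrib, ← Finset.mul_sum]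
            _ = α - 2*c*α + c^2 * S := by
                rw [indsum I (fun v => marg μ (i+1) (by omega) (Fin.snoc σ v)), ← hαdef, ← hrowS]
        rw [hQ, hD] at hsp
        -- final algebra
        rw [hsplit]
        have hceq : c * S = α := div_mul_cancel₀ _ (ne_of_gt hSpos)
        have hc2S : c^2 * S = q := by
          rw [hqdef, hcdef]
          field_simp
        have hcα : c * α = q := by
          rw [hqdef, hcdef]
          field_simp
        have hβ' : (∑ u ∈ I, ∑ v ∈ I, marg μ (i+2) (by omega) (Fin.snoc (Fin.snoc σ u) v))
            ≥ q + lam i * (α - q) := by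
          have := hsp
          nlinarith [hc2S, hcα]
        have hRHS : (1 - 1/((1 - lam i) * P')) = (B' - lam i)/(1 - lam i) := by
          rw [hB'def]
          field_simp
          ring
        rw [hRHS]
        rw [div_mul_eq_mul_div, le_div_iff₀ h1L]
        -- goal : α * (1 - lam i) ≤ (B' - lam i) * S
        rcases eq_or_lt_of_le hαnn with hα0 | hαpos
        · rw [← hα0]
          have : 0 ≤ (B' - lam i) := by linarith
          nlinarith
        · have hβ2 : q + lam i * (α - q) ≤ B' * α := by
            have h6 := hβ
            nlinarith [hβ', hβ]
          have h6 : (q + lam i * (α - q)) * S ≤ (B' * α) * S :=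
            mul_le_mul_of_nonneg_right hβ2 hSnn
          have h7 : α^2*(1 - lam i) + lam i * α * S ≤ B' * α * S := by
            calc α^2*(1 - lam i) + lam i * α * S
                = (q*S)*(1 - lam i) + lam i * α * S := by rw [hqS]
              _ = (q + lam i * (α - q)) * S := by ring
              _ ≤ B' * α * S := h6
          have h8 : α * (α * (1 - lam i)) ≤ α * ((B' - lam i) * S) := by nlinarith [h7]
          exact le_of_mul_le_mul_left h8 hαpos
  -- conclude from key with i = 0
  have h0 := key (k-1) 0 (by omega) (fun t => t.elim0) (fun t => t.elim0)
  have hIco : Finset.Ico 0 (k-1) = Finset.range (k-1) := by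
    rw [Finset.range_eq_Ico]
  rw [hIco] at h0
  rw [marg_zero μ (by omega) (fun t => t.elim0)] at h0
  calc ∑ v ∈ I, marg μ 1 (by omega) (fun _ => v)
      = ∑ v ∈ I, marg μ (0+1) (by omega) (Fin.snoc (fun t => t.elim0) v) := by
        refine Finset.sum_congr rfl fun v _ => ?_
        congr 1
    _ ≤ _ := h0

/-- **Sharpness of the high dimensional Hoffman bound is inherited by tensor powers.**
Let `μ` be a weighted `k`-uniform hypergraph on a finite vertex set `V` (nonnegative, total
sum 1, symmetric under permutations of the coordinates), whose link quadratic forms are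
bounded below by `λ_i ≤ 0` (`0 ≤ i ≤ k-2`). Set `B = 1 - 1/((1-λ_0)⋯(1-λ_{k-2}))`, and
suppose some independent set `I₀ ⊆ V` has measure exactly `B`. Then for every `n ≥ 1`:
(a) every independent set `J` of the `n`-th tensor power has measure at most `B`, and
(b) some independent set `J` of the `n`-th tensor power has measure exactly `B`.
In particular the independence number of the `n`-th tensor power equals `B`. -/

theorem high_dimensional_hoffman_bound_tensor_power_sharp
    {V : Type*} [Fintype V] [Nonempty V] (k : ℕ) (hk : 2 ≤ k)
    (μ : (Fin k → V) → ℝ)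
    (hnonneg : ∀ τ : Fin k → V, 0 ≤ μ τ)
    (hsum : ∑ τ : Fin k → V, μ τ = 1)
    (hsymm : ∀ (π : Equiv.Perm (Fin k)) (τ : Fin k → V), μ (τ ∘ π) = μ τ)
    (lam : ℕ → ℝ)
    (hlam : ∀ i : ℕ, i ≤ k - 2 → lam i ≤ 0)
    (hspec : ∀ (i : ℕ) (hi : i ≤ k - 2) (σ : Fin i → V),
      0 < marg μ i (by omega) σ →
      ∀ f : V → ℝ,
        ∑ u : V, ∑ v : V,
            marg μ (i + 2) (by omega) (Fin.snoc (Fin.snoc σ u) v) * f u * f v ≥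
          lam i * ∑ v : V,
            (∑ u : V, marg μ (i + 2) (by omega) (Fin.snoc (Fin.snoc σ v) u)) * f v ^ 2)
    (I₀ : Finset V)
    (hI₀ind : ∀ τ : Fin k → V, (∀ j : Fin k, τ j ∈ I₀) → μ τ = 0)
    (hI₀sharp : ∑ v ∈ I₀, marg μ 1 (by omega) (fun _ => v) =
      1 - 1 / ∏ i ∈ Finset.range (k - 1), (1 - lam i))
    (n : ℕ) (hn : 1 ≤ n) :
    (∀ J : Finset (Fin n → V),
      (∀ τ : Fin k → (Fin n → V), (∀ i : Fin k, τ i ∈ J) → tensorPow μ n τ = 0) →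
      ∑ x ∈ J, ∏ j : Fin n, marg μ 1 (by omega) (fun _ => x j) ≤
        1 - 1 / ∏ i ∈ Finset.range (k - 1), (1 - lam i)) ∧
    (∃ J : Finset (Fin n → V),
      (∀ τ : Fin k → (Fin n → V), (∀ i : Fin k, τ i ∈ J) → tensorPow μ n τ = 0) ∧
      ∑ x ∈ J, ∏ j : Fin n, marg μ 1 (by omega) (fun _ => x j) =
        1 - 1 / ∏ i ∈ Finset.range (k - 1), (1 - lam i)) := by
  classical
  have hswapμ : ∀ (i : ℕ) (h : i + 2 ≤ k) (σ : Fin i → V) (u v : V),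
      marg μ (i+2) h (Fin.snoc (Fin.snoc σ u) v) = marg μ (i+2) h (Fin.snoc (Fin.snoc σ v) u) :=
    fun i h σ u v => marg_swap μ hsymm h σ u v
  -- unconditional kernel bound for the links of μ
  have hkerμ : ∀ (i : ℕ) (hi : i ≤ k - 2) (σ : Fin i → V) (f : V → ℝ),
      lam i * ∑ v, (∑ u, marg μ (i+2) (by omega) (Fin.snoc (Fin.snoc σ v) u)) * f v ^ 2 ≤
        ∑ u, ∑ v, marg μ (i+2) (by omega) (Fin.snoc (Fin.snoc σ u) v) * f u * f v := by
    intro i hi σ f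
    by_cases hpos : 0 < marg μ i (by omega : i ≤ k) σ
    · exact hspec i hi σ hpos f
    · have hS : marg μ i (by omega : i ≤ k) σ = 0 :=
        le_antisymm (not_lt.1 hpos) (marg_nonneg hnonneg _ _)
      have h1 : ∀ u : V, marg μ (i+1) (by omega : i+1 ≤ k) (Fin.snoc σ u) = 0 := by
        have := (marg_succ μ (by omega) (by omega) σ).symm.trans hS
        intro u
        exact (Finset.sum_eq_zero_iff_of_nonneg
          (fun x _ => marg_nonneg hnonneg _ _)).1 this u (Finset.mem_univ u)
      have h2 : ∀ u v : V, marg μ (i+2) (by omega : i+2 ≤ k) (Fin.snoc (Fin.snoc σ u) v) = 0 := by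
        intro u v
        have := (marg_succ μ (by omega : i+1 ≤ k) (by omega) (Fin.snoc σ u)).symm.trans (h1 u)
        exact (Finset.sum_eq_zero_iff_of_nonneg
          (fun x _ => marg_nonneg hnonneg _ _)).1 this v (Finset.mem_univ v)
      simp [h2]
  have hnnW : ∀ τ : Fin k → (Fin n → V), 0 ≤ tensorPow μ n τ :=
    fun τ => Finset.prod_nonneg fun j _ => hnonneg _
  have htotal : (∑ τ : Fin k → (Fin n → V), tensorPow μ n τ) = 1 := by
    rw [← marg_zero (tensorPow μ n) (by omega) (fun t => t.elim0)]
    rw [marg_tensorPow]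
    rw [show (1:ℝ) = ∏ j : Fin n, (1:ℝ) by rw [Finset.prod_const_one]]
    refine Finset.prod_congr rfl fun j _ => ?_
    rw [marg_zero μ (by omega)]
    exact hsum
  have colsnoc2 : ∀ {m : ℕ} (σ : Fin m → (Fin n → V)) (u v : Fin n → V) (j : Fin n),
      (fun t : Fin (m+2) => (Fin.snoc (Fin.snoc σ u) v : Fin (m+2) → (Fin n → V)) t j)
        = Fin.snoc (Fin.snoc (fun t => σ t j) (u j)) (v j) := by
    intro m σ u v j
    rw [snoc_col (Fin.snoc σ u) v j, snoc_col σ u j]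
  have hswapW : ∀ (i : ℕ) (h : i + 2 ≤ k) (σ : Fin i → (Fin n → V)) (u v : Fin n → V),
      marg (tensorPow μ n) (i+2) h (Fin.snoc (Fin.snoc σ u) v)
        = marg (tensorPow μ n) (i+2) h (Fin.snoc (Fin.snoc σ v) u) := by
    intro i h σ u v
    rw [marg_tensorPow, marg_tensorPow]
    refine Finset.prod_congr rfl fun j _ => ?_
    rw [colsnoc2 σ u v j, colsnoc2 σ v u j]
    exact hswapμ i h (fun t => σ t j) (u j) (v j)
  have hspecW : ∀ (i : ℕ) (hi : i ≤ k - 2) (σ : Fin i → (Fin n → V)),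
      0 < marg (tensorPow μ n) i (by omega) σ → ∀ f : (Fin n → V) → ℝ,
        ∑ u, ∑ v, marg (tensorPow μ n) (i+2) (by omega) (Fin.snoc (Fin.snoc σ u) v) * f u * f v ≥
          lam i * ∑ v, (∑ u, marg (tensorPow μ n) (i+2) (by omega)
            (Fin.snoc (Fin.snoc σ v) u)) * f v ^ 2 := by
    intro i hi σ _ f
    have hXY : ∀ (u v : Fin n → V),
        marg (tensorPow μ n) (i+2) (by omega : i+2 ≤ k) (Fin.snoc (Fin.snoc σ u) v)
          = ∏ j : Fin n, marg μ (i+2) (by omega : i+2 ≤ k)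
              (Fin.snoc (Fin.snoc (fun t => σ t j) (u j)) (v j)) := by
      intro u v
      rw [marg_tensorPow]
      exact Finset.prod_congr rfl fun j _ => by rw [colsnoc2 σ u v j]
    simp only [hXY]
    exact tensor_kernel
      (fun j a b => marg μ (i+2) (by omega) (Fin.snoc (Fin.snoc (fun t => σ t j) a) b))
      (lam i) (hlam i hi)
      (fun j a b => hswapμ i (by omega) (fun t => σ t j) a b)
      (fun j a b => marg_nonneg hnonneg _ _)
      (fun j g => hkerμ i hi (fun t => σ t j) g) f
  constructor
  · intro J hJ
    have h := hoffman k hk (tensorPow μ n) hnnW hswapW lam hlam hspecW J hJ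
    rw [htotal, mul_one] at h
    calc ∑ x ∈ J, ∏ j : Fin n, marg μ 1 (by omega) (fun _ => x j)
        = ∑ x ∈ J, marg (tensorPow μ n) 1 (by omega) (fun _ => x) := by
          refine Finset.sum_congr rfl fun x _ => ?_
          rw [marg_tensorPow]
      _ ≤ _ := h
  · refine ⟨Finset.univ.filter (fun x : Fin n → V => x ⟨0, hn⟩ ∈ I₀), ?_, ?_⟩
    · intro τ hτ
      refine Finset.prod_eq_zero (Finset.mem_univ (⟨0, hn⟩ : Fin n)) ?_
      exact hI₀ind (fun i => τ i ⟨0, hn⟩)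
        (fun i => (Finset.mem_filter.1 (hτ i)).2)
    · have hm1 : (∑ v : V, marg μ 1 (by omega : (1:ℕ) ≤ k) (fun _ => v)) = 1 := by
        have h0 : (∑ v : V, marg μ 1 (by omega : (1:ℕ) ≤ k)
            (Fin.snoc (fun t : Fin 0 => t.elim0) v)) = 1 := by
          have h1 := (marg_succ μ (by omega : (0:ℕ) ≤ k) (by omega : (1:ℕ) ≤ k)
            (fun t : Fin 0 => t.elim0)).symm
          rw [marg_zero μ (by omega)] at h1
          exact h1.trans hsum
        rw [← h0]
        refine Finset.sum_congr rfl fun v _ => ?_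
        congr 1
      set g : Fin n → V → ℝ := fun j v =>
        if j = (⟨0, hn⟩ : Fin n) then (if v ∈ I₀ then marg μ 1 (by omega) (fun _ => v) else 0)
        else marg μ 1 (by omega) (fun _ => v) with hg
      calc ∑ x ∈ Finset.univ.filter (fun x : Fin n → V => x ⟨0, hn⟩ ∈ I₀),
            ∏ j : Fin n, marg μ 1 (by omega) (fun _ => x j)
          = ∑ x : Fin n → V, ∏ j : Fin n, g j (x j) := by
            rw [Finset.sum_filter]
            refine Finset.sum_congr rfl fun x _ => ?_
            by_cases hx : x ⟨0, hn⟩ ∈ I₀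
            · rw [if_pos hx]
              refine Finset.prod_congr rfl fun j _ => ?_
              by_cases hj : j = (⟨0, hn⟩ : Fin n)
              · simp [hg, hj, hx]
              · simp [hg, hj]
            · rw [if_neg hx]
              refine (Finset.prod_eq_zero (Finset.mem_univ (⟨0, hn⟩ : Fin n)) ?_).symm
              simp [hg, hx]
        _ = ∏ j : Fin n, ∑ v : V, g j v := (Fintype.prod_sum g).symm
        _ = ∑ v ∈ I₀, marg μ 1 (by omega) (fun _ => v) := by
            rw [Finset.prod_eq_single (⟨0, hn⟩ : Fin n)]
            · have hgv : ∀ v : V, g (⟨0, hn⟩ : Fin n) v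
                  = if v ∈ I₀ then marg μ 1 (by omega) (fun _ => v) else 0 := by
                intro v
                simp [hg]
              rw [Finset.sum_congr rfl (fun v _ => hgv v)]
              rw [← Finset.sum_filter]
              refine Finset.sum_congr ?_ (fun v _ => rfl)
              ext v
              simp
            · intro b _ hb
              have hgv : ∀ v : V, g b v = marg μ 1 (by omega) (fun _ => v) := by
                intro v
                simp [hg, hb]
              rw [Finset.sum_congr rfl (fun v _ => hgv v)]
              exact hm1
            · intro hh
              exact absurd (Finset.mem_univ _) hh
        _ = 1 - 1 / ∏ i ∈ Finset.range (k - 1), (1 - lam i) := hI₀sharp
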